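/- If a ladder system ⟨ζ_δ : δ ∈ lim(ω₁)⟩ on the limit ordinals satisfies 3-uniformization, then there is a ladder system ⟨ζ'_α : α ∈ [ω, ω₁)⟩ on all of [ω, ω₁) which satisfies 3-uniformization, obtained by setting ζ'_{δ+n} = ζ_δ ∘ θ_n where ω is partitioned into infinitely many infinite sets Y_n and θ_n : ω → Y_n enumerates Y_n in increasing order. -/

import Mathlib

open Ordinal Set

noncomputable def omega1 : Ordinal := (Cardinal.aleph 1).ord

def IsLadderOn (δ : Ordinal) (η : ℕ → Ordinal) : Prop :=
  StrictMono η ∧ (∀ n, η n < δ) ∧ ∀ β < δ, ∃ n, β ≤ η n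

def IsLadderAt (α : Ordinal) (η : ℕ → Ordinal) : Prop :=
  ∃ (δ : Ordinal) (n : ℕ), Order.IsSuccLimit δ ∧ α = δ + n ∧ IsLadderOn δ η

def IsClub' (C : Set Ordinal) : Prop :=
  C ⊆ Set.Iio omega1 ∧
  (∀ α < omega1, ∃ β ∈ C, α < β) ∧
  (∀ δ < omega1, Order.IsSuccLimit δ → (∀ α < δ, ∃ β ∈ C, α < β ∧ β < δ) → δ ∈ C)

def IsStat (S : Set Ordinal) : Prop := ∀ C, IsClub' C → (S ∩ C).Nonempty

def UnifBelow (S : Set Ordinal) (η : Ordinal → ℕ → Ordinal) (h : Ordinal → ℕ → ℕ) : Prop :=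
  ∀ c : Ordinal → ℕ → ℕ, (∀ α ∈ S, ∀ n, c α n < h α n) →
    ∃ (f : Ordinal → ℕ) (fs : Ordinal → ℕ), ∀ α ∈ S, ∀ n, fs α ≤ n → f (η α n) = c α n

def LambdaUnif (S : Set Ordinal) (η : Ordinal → ℕ → Ordinal) (l : ℕ) : Prop :=
  UnifBelow S η (fun _ _ => l)

def OmegaUnif (S : Set Ordinal) (η : Ordinal → ℕ → Ordinal) : Prop :=
  ∀ c : Ordinal → ℕ → ℕ,
    ∃ (f : Ordinal → ℕ) (fs : Ordinal → ℕ), ∀ α ∈ S, ∀ n, fs α ≤ n → f (η α n) = c α n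

def TreeLike (S : Set Ordinal) (η : Ordinal → ℕ → Ordinal) : Prop :=
  ∀ α ∈ S, ∀ β ∈ S, ∀ n m, η α n = η β m → n = m ∧ ∀ k ≤ n, η α k = η β k

def StronglyTreeLike (S : Set Ordinal) (η : Ordinal → ℕ → Ordinal) (F : Ordinal → ℕ) : Prop :=
  TreeLike S η ∧ ∀ α ∈ S, ∀ β ∈ S, ∀ n m, η α n = η β m → F α = F β


noncomputable def limPart (α : Ordinal) : Ordinal := Ordinal.omega0 * (α / Ordinal.omega0)

noncomputable def natPart (α : Ordinal) : ℕ :=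
  Classical.choose (Ordinal.lt_omega0.mp (Ordinal.mod_lt α Ordinal.omega0_ne_zero))

theorem limPart_add_natPart (α : Ordinal) : limPart α + natPart α = α := by
  have h := Classical.choose_spec
    (Ordinal.lt_omega0.mp (Ordinal.mod_lt α Ordinal.omega0_ne_zero))
  rw [limPart, natPart, ← h, Ordinal.div_add_mod]

theorem limPart_isLimit {α : Ordinal} (hα : Ordinal.omega0 ≤ α) : Order.IsSuccLimit (limPart α) := by
  rw [Ordinal.isSuccLimit_iff_omega0_dvd]
  refine ⟨?_, ⟨_, rfl⟩⟩
  have h1 : (1 : Ordinal) ≤ α / Ordinal.omega0 := by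
    rw [Ordinal.le_div Ordinal.omega0_ne_zero]
    simpa using hα
  intro h
  rw [limPart] at h
  rcases mul_eq_zero.mp h with h | h
  · exact Ordinal.omega0_ne_zero h
  · rw [h] at h1; exact absurd h1 (not_le.mpr zero_lt_one)

theorem limPart_le (α : Ordinal) : limPart α ≤ α := by
  conv_rhs => rw [← limPart_add_natPart α]
  exact le_self_add

theorem add_nat_lt_omega1 {δ : Ordinal} (hδ : δ < omega1) (n : ℕ) : δ + n < omega1 := by
  have hlim : Order.IsSuccLimit omega1 := Cardinal.isSuccLimit_ord (Cardinal.aleph0_le_aleph 1)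
  induction n with
  | zero => simpa using hδ
  | succ k ih =>
      have h2 : (δ + k) + 1 < omega1 := hlim.succ_lt ih
      rw [Nat.cast_add, Nat.cast_one, ← add_assoc]
      exact h2

/-- The core construction, in a single universe. -/
theorem stmt7_core.{u} (ζ : Ordinal.{u} → ℕ → Ordinal.{u})
    (hζ : ∀ δ, δ < omega1 → Order.IsSuccLimit δ → IsLadderOn δ (ζ δ))
    (hunif : LambdaUnif {δ | δ < omega1 ∧ Order.IsSuccLimit δ} ζ 3) :
    ∃ ζ' : Ordinal.{u} → ℕ → Ordinal.{u},
      (∀ α ∈ Set.Ico (Ordinal.omega0) omega1, IsLadderAt α (ζ' α)) ∧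
      LambdaUnif (Set.Ico (Ordinal.omega0) omega1) ζ' 3 := by
  classical
  set ζ' : Ordinal.{u} → ℕ → Ordinal.{u} :=
    fun α k => ζ (limPart α) (Nat.pair (natPart α) k) with hζ'def
  have hdec : ∀ α ∈ Set.Ico (Ordinal.omega0) omega1,
      Order.IsSuccLimit (limPart α) ∧ limPart α < omega1 := by
    rintro α ⟨h1, h2⟩
    exact ⟨limPart_isLimit h1, lt_of_le_of_lt (limPart_le α) h2⟩
  refine ⟨ζ', ?_, ?_⟩
  · rintro α hα
    obtain ⟨hlim, hlt⟩ := hdec α hα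
    obtain ⟨hsm, hlt', hcof⟩ := hζ _ hlt hlim
    refine ⟨limPart α, natPart α, hlim, (limPart_add_natPart α).symm, ?_, ?_, ?_⟩
    · intro k l hkl
      exact hsm (Nat.pair_lt_pair_right _ hkl)
    · intro k; exact hlt' _
    · intro β hβ
      obtain ⟨m, hm⟩ := hcof β hβ
      exact ⟨m, hm.trans (hsm.monotone (Nat.right_le_pair _ _))⟩
  · intro c hc
    set c' : Ordinal.{u} → ℕ → ℕ :=
      fun δ m => c (δ + (Nat.unpair m).1) (Nat.unpair m).2 with hc'def
    have hc'lt : ∀ δ ∈ {δ : Ordinal.{u} | δ < omega1 ∧ Order.IsSuccLimit δ}, ∀ m, c' δ m < 3 := by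
      rintro δ ⟨h1, h2⟩ m
      exact hc _ ⟨(Ordinal.omega0_le_of_isSuccLimit h2).trans le_self_add,
        add_nat_lt_omega1 h1 _⟩ _
    obtain ⟨f, fs, hf⟩ := hunif c' hc'lt
    refine ⟨f, fun α => fs (limPart α), ?_⟩
    intro α hα n hn
    obtain ⟨hlim, hlt⟩ := hdec α hα
    have hmem : limPart α ∈ {δ : Ordinal.{u} | δ < omega1 ∧ Order.IsSuccLimit δ} := ⟨hlt, hlim⟩
    have h := hf _ hmem (Nat.pair (natPart α) n)
      (hn.trans (Nat.right_le_pair _ _))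
    simpa [hζ'def, hc'def, Nat.unpair_pair, limPart_add_natPart α] using h

theorem lift_omega1.{v, w} :
    Ordinal.lift.{w, v} omega1.{v} = omega1.{max v w} := by
  rw [omega1, Cardinal.lift_ord, Cardinal.lift_aleph, Ordinal.lift_one, omega1]

open Classical in
/-- Transfer an ordinal below `ω₁` from universe `v` to universe `w`. -/
noncomputable def trOrd.{v, w} (α : Ordinal.{v}) : Ordinal.{w} :=
  if h : ∃ β : Ordinal.{w}, Ordinal.lift.{v, w} β = Ordinal.lift.{w, v} α
  then h.choose else 0

theorem lift_trOrd.{v, w} {α : Ordinal.{v}} (h : α < omega1) :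
    Ordinal.lift.{v, w} (trOrd.{v, w} α) = Ordinal.lift.{w, v} α := by
  have hle : Ordinal.lift.{w, v} α ≤ Ordinal.lift.{v, w} omega1.{w} := by
    rw [lift_omega1.{w, v}]
    exact le_of_lt (by rw [← lift_omega1.{v, w}]; exact (Ordinal.lift_lt).mpr h)
  obtain ⟨β, hβ⟩ := Ordinal.mem_range_lift_of_le hle
  have hex : ∃ β : Ordinal.{w}, Ordinal.lift.{v, w} β = Ordinal.lift.{w, v} α := ⟨β, hβ⟩
  rw [trOrd, dif_pos hex]
  exact hex.choose_spec

theorem trOrd_lt_omega1.{v, w} {α : Ordinal.{v}} (h : α < omega1) :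
    trOrd.{v, w} α < omega1.{w} := by
  have h2 : Ordinal.lift.{v, w} (trOrd.{v, w} α) < omega1.{max v w} := by
    rw [lift_trOrd.{v, w} h, ← lift_omega1.{v, w}]
    exact Ordinal.lift_lt.mpr h
  have h3 : Ordinal.lift.{v, w} (trOrd.{v, w} α) < Ordinal.lift.{v, w} omega1.{w} := by
    rw [lift_omega1.{w, v}]; exact h2
  exact Ordinal.lift_lt.mp h3

theorem trOrd_trOrd.{v, w} {α : Ordinal.{v}} (h : α < omega1) :
    trOrd.{w, v} (trOrd.{v, w} α) = α := by
  have h2 : trOrd.{v, w} α < omega1.{w} := trOrd_lt_omega1 h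
  have e1 := lift_trOrd.{w, v} h2
  have e2 := lift_trOrd.{v, w} h
  apply Ordinal.lift_inj.{w, v}.mp
  rw [e1, e2]

theorem trOrd_lt_trOrd.{v, w} {α β : Ordinal.{v}} (hα : α < omega1) (hβ : β < omega1) :
    trOrd.{v, w} α < trOrd.{v, w} β ↔ α < β := by
  rw [← Ordinal.lift_lt.{v, w}, lift_trOrd hα, lift_trOrd hβ, Ordinal.lift_lt]

theorem trOrd_le_trOrd.{v, w} {α β : Ordinal.{v}} (hα : α < omega1) (hβ : β < omega1) :
    trOrd.{v, w} α ≤ trOrd.{v, w} β ↔ α ≤ β := by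
  rw [← Ordinal.lift_le.{v, w}, lift_trOrd hα, lift_trOrd hβ, Ordinal.lift_le]

theorem trOrd_isLimit.{v, w} {α : Ordinal.{v}} (h : α < omega1) :
    Order.IsSuccLimit (trOrd.{v, w} α) ↔ Order.IsSuccLimit α := by
  rw [← Ordinal.isSuccLimit_lift.{v, w}, lift_trOrd h, Ordinal.isSuccLimit_lift]

/-- If a ladder system on the countable limit ordinals satisfies 3-uniformization, then
there is a ladder system on all of `[ω, ω₁)` which satisfies 3-uniformization. -/
theorem stmt7 (ζ : Ordinal → ℕ → Ordinal)
    (hζ : ∀ δ, δ < omega1 → Order.IsSuccLimit δ → IsLadderOn δ (ζ δ))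
    (hunif : LambdaUnif {δ | δ < omega1 ∧ Order.IsSuccLimit δ} ζ 3) :
    ∃ ζ' : Ordinal → ℕ → Ordinal,
      (∀ α ∈ Set.Ico (Ordinal.omega0) omega1, IsLadderAt α (ζ' α)) ∧
      LambdaUnif (Set.Ico (Ordinal.omega0) omega1) ζ' 3 := by
  classical
  -- transfer ζ from universe u_1 (= v) to universe u_2 (= w)
  apply stmt7_core (fun δ n => trOrd (ζ (trOrd δ) n))
  · -- ladder hypothesis
    intro δ hδ hδlim
    have hδ1 : trOrd δ < omega1 := trOrd_lt_omega1 hδ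
    have hδ1lim : Order.IsSuccLimit (trOrd δ) := (trOrd_isLimit hδ).mpr hδlim
    obtain ⟨hsm, hlt, hcof⟩ := hζ _ hδ1 hδ1lim
    have hvlt : ∀ n, ζ (trOrd δ) n < omega1 := fun n => (hlt n).trans hδ1
    refine ⟨?_, ?_, ?_⟩
    · intro k l hkl
      exact (trOrd_lt_trOrd (hvlt k) (hvlt l)).mpr (hsm hkl)
    · intro n
      have h2 := (trOrd_lt_trOrd (hvlt n) hδ1).mpr (hlt n)
      rwa [trOrd_trOrd hδ] at h2
    · intro β hβ
      have hβ1 : β < omega1 := hβ.trans hδ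
      have hβ2 : trOrd β < trOrd δ := (trOrd_lt_trOrd hβ1 hδ).mpr hβ
      obtain ⟨n, hn⟩ := hcof _ hβ2
      refine ⟨n, ?_⟩
      have h3 := (trOrd_le_trOrd (trOrd_lt_omega1 hβ1) (hvlt n)).mpr hn
      rwa [trOrd_trOrd hβ1] at h3
  · -- uniformization hypothesis
    intro c hc
    have hside : ∀ δ ∈ {δ : Ordinal | δ < omega1 ∧ Order.IsSuccLimit δ}, ∀ n,
        (fun δ n => c (trOrd δ) n) δ n < (fun (_ : Ordinal) (_ : ℕ) => 3) δ n := by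
      rintro δ ⟨hδ, hδlim⟩ n
      exact hc _ ⟨trOrd_lt_omega1 hδ, (trOrd_isLimit hδ).mpr hδlim⟩ n
    obtain ⟨f, fs, hf⟩ := hunif (fun δ n => c (trOrd δ) n) hside
    refine ⟨fun β => f (trOrd β), fun δ => fs (trOrd δ), ?_⟩
    rintro δ ⟨hδ, hδlim⟩ n hn
    have hδ1 : trOrd δ < omega1 := trOrd_lt_omega1 hδ
    have hδ1lim : Order.IsSuccLimit (trOrd δ) := (trOrd_isLimit hδ).mpr hδlim
    obtain ⟨hsm, hlt, hcof⟩ := hζ _ hδ1 hδ1lim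
    have hvlt : ζ (trOrd δ) n < omega1 := (hlt n).trans hδ1
    have h := hf _ ⟨hδ1, hδ1lim⟩ n hn
    show f (trOrd (trOrd (ζ (trOrd δ) n))) = c δ n
    rw [trOrd_trOrd hvlt, h, trOrd_trOrd hδ]
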